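/- Let A ∈ ℝ^{m×n} be a matrix none of whose rows is the zero vector, T ∈ ℝ^{n×n}, λ ≥ 0, and let c ∈ ℝ^m with c ≥ 0 componentwise (in the paper, c_i = w̄_i²(1/z̄_i − 1) for given w̄ ∈ ℝ^m and z̄ ∈ (0,1]^m). Set R = AᵀA + λTᵀT. Suppose u* ∈ ℝ^m is optimal for the problem: minimize Σ_{i=1}^m c_i/u_i subject to u_i ≥ 1 for all i and R − Aᵀ·Diag(u)·A ⪰ 0 (positive semidefinite). Define d* ∈ ℝ^m by d*_i = 1 − 1/u*_i. Then d* is optimal for the problem: maximize Σ_{i=1}^m c_i d_i subject to d ≥ 0 and the block matrix [[R, −Aᵀ], [−A, I − Diag(d)]] ⪰ 0. That is, d* is feasible for the second problem, and Σ_{i=1}^m c_i d*_i ≥ Σ_{i=1}^m c_i d_i for every d ∈ ℝ^m with d ≥ 0 and [[R, −Aᵀ], [−A, I − Diag(d)]] ⪰ 0. -/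

import Mathlib

open Matrix

lemma schur_diag {m n : ℕ} (A : Matrix (Fin m) (Fin n) ℝ)
    (R : Matrix (Fin n) (Fin n) ℝ) (f : Fin m → ℝ) (hf : ∀ i, 0 < 1 - f i) :
    (Matrix.fromBlocks R (-Aᵀ) (-A) (1 - Matrix.diagonal f)).PosSemidef ↔
      (R - Aᵀ * Matrix.diagonal (fun i => (1 - f i)⁻¹) * A).PosSemidef := by
  have hdiag : (1 : Matrix (Fin m) (Fin m) ℝ) - Matrix.diagonal f
      = Matrix.diagonal (fun i => 1 - f i) := by
    rw [← Matrix.diagonal_one, Matrix.diagonal_sub]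
  have hD : (Matrix.diagonal (fun i => 1 - f i)).PosDef :=
    Matrix.posDef_diagonal_iff.mpr hf
  haveI : Invertible (Matrix.diagonal (fun i => 1 - f i)) := by
    apply Matrix.invertibleOfIsUnitDet
    rw [Matrix.det_diagonal]
    exact isUnit_iff_ne_zero.mpr (Finset.prod_ne_zero_iff.mpr fun i _ => (hf i).ne')
  have h1 : (-Aᵀ)ᴴ = (-A : Matrix (Fin m) (Fin n) ℝ) := by
    ext i j; simp [Matrix.conjTranspose_apply]
  have hinv : (Matrix.diagonal (fun i => 1 - f i))⁻¹
      = Matrix.diagonal (fun i => (1 - f i)⁻¹) := by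
    apply Matrix.inv_eq_right_inv
    rw [Matrix.diagonal_mul_diagonal]
    have : (fun i => (1 - f i) * (1 - f i)⁻¹) = fun _ => (1:ℝ) :=
      funext fun i => mul_inv_cancel₀ (hf i).ne'
    rw [this, Matrix.diagonal_one]
  rw [hdiag, ← h1, Matrix.PosDef.fromBlocks₂₂ R (-Aᵀ) hD, h1, hinv]
  have : (-Aᵀ) * Matrix.diagonal (fun i => (1 - f i)⁻¹) * (-A)
      = Aᵀ * Matrix.diagonal (fun i => (1 - f i)⁻¹) * A := by
    rw [Matrix.neg_mul, Matrix.neg_mul, Matrix.mul_neg, neg_neg]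
  rw [this]

lemma entry_lt_one {m n : ℕ} (A : Matrix (Fin m) (Fin n) ℝ) (hA : ∀ i, A i ≠ 0)
    (R : Matrix (Fin n) (Fin n) ℝ) (e : Fin m → ℝ)
    (h : (Matrix.fromBlocks R (-Aᵀ) (-A) (1 - Matrix.diagonal e)).PosSemidef)
    (i : Fin m) : e i < 1 := by
  by_contra hei
  push_neg at hei
  set α := A i ⬝ᵥ (R *ᵥ A i) with hα
  have hβ : 0 < A i ⬝ᵥ A i := by
    have h0 : 0 ≤ A i ⬝ᵥ A i := Finset.sum_nonneg (fun j _ => mul_self_nonneg _)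
    rcases h0.lt_or_eq with h1 | h1
    · exact h1
    · exact absurd (dotProduct_self_eq_zero.mp h1.symm) (hA i)
  set β := A i ⬝ᵥ A i with hβdef
  set t := (α + 1)/(2*β) with ht
  have key := (posSemidef_iff_dotProduct_mulVec.mp h).2 (Sum.elim (A i) (t • (Pi.single i 1 : Fin m → ℝ)))
  simp only [Matrix.fromBlocks_mulVec, sumElim_dotProduct_sumElim,
    star_trivial, Sum.elim_comp_inl, Sum.elim_comp_inr, dotProduct_add,
    Matrix.mulVec_smul, dotProduct_smul, smul_dotProduct,
    dotProduct_neg, Matrix.neg_mulVec, Matrix.sub_mulVec, Matrix.one_mulVec,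
    Matrix.mulVec_diagonal, smul_eq_mul, neg_dotProduct,
    add_dotProduct, dotProduct_sub, sub_dotProduct] at key
  simp only [Matrix.mulVec_single, single_dotProduct, dotProduct_single,
    Matrix.transpose_apply, mul_one, one_mul, Matrix.mulVec_diagonal, Pi.single_eq_same,
    MulOpposite.op_one, one_smul, Matrix.col_apply] at key
  have h2 : (A *ᵥ A i) i = β := rfl
  have h3 : (A i ⬝ᵥ fun j => A i j) = β := rfl
  have h5 : A i ⬝ᵥ Aᵀ.col i = β := rfl
  rw [h2, h5, ← hα, Matrix.diagonal_apply_eq] at key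
  have htβ : 2 * t * β = α + 1 := by
    rw [ht]; field_simp
  have hnp : t * (t - t * e i) ≤ 0 := by
    have h4 : t - t * e i = t * (1 - e i) := by ring
    rw [h4]
    have : t * (t * (1 - e i)) = (t * t) * (1 - e i) := by ring
    rw [this]
    exact mul_nonpos_of_nonneg_of_nonpos (mul_self_nonneg t) (by linarith)
  linarith

/-- Reformulation of the SDP `max Σ cᵢdᵢ s.t. d ≥ 0, [[R, -Aᵀ],[-A, I - Diag(d)]] ⪰ 0`
via the lower-dimensional problem `min Σ cᵢ/uᵢ s.t. u ≥ 1, R - AᵀDiag(u)A ⪰ 0`: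
if `u*` is optimal for the latter, then `d*ᵢ = 1 - 1/u*ᵢ` is optimal for the former. -/
theorem sdp_reformulation
    (m n : ℕ) (A : Matrix (Fin m) (Fin n) ℝ) (hA : ∀ i, A i ≠ 0)
    (T : Matrix (Fin n) (Fin n) ℝ) (lam : ℝ) (hlam : 0 ≤ lam)
    (c : Fin m → ℝ) (hc : ∀ i, 0 ≤ c i)
    (u : Fin m → ℝ)
    (hu_feas : (∀ i, 1 ≤ u i) ∧
      (Aᵀ * A + lam • (Tᵀ * T) - Aᵀ * Matrix.diagonal u * A).PosSemidef)
    (hu_opt : ∀ v : Fin m → ℝ, (∀ i, 1 ≤ v i) →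
      (Aᵀ * A + lam • (Tᵀ * T) - Aᵀ * Matrix.diagonal v * A).PosSemidef →
      ∑ i, c i / u i ≤ ∑ i, c i / v i)
    (d : Fin m → ℝ) (hd : ∀ i, d i = 1 - 1 / u i) :
    ((∀ i, 0 ≤ d i) ∧
      (Matrix.fromBlocks (Aᵀ * A + lam • (Tᵀ * T)) (-Aᵀ) (-A)
        (1 - Matrix.diagonal d)).PosSemidef) ∧
    (∀ e : Fin m → ℝ, (∀ i, 0 ≤ e i) →
      (Matrix.fromBlocks (Aᵀ * A + lam • (Tᵀ * T)) (-Aᵀ) (-A)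
        (1 - Matrix.diagonal e)).PosSemidef →
      ∑ i, c i * e i ≤ ∑ i, c i * d i) := by
  obtain ⟨hu1, hufe⟩ := hu_feas
  have hu0 : ∀ i, 0 < u i := fun i => lt_of_lt_of_le one_pos (hu1 i)
  have hdsub : ∀ i, (1:ℝ) - d i = 1 / u i := fun i => by rw [hd i]; ring
  have hd1 : ∀ i, 0 < 1 - d i := fun i => by
    rw [hdsub i]; exact one_div_pos.mpr (hu0 i)
  have hdnn : ∀ i, 0 ≤ d i := fun i => by
    have h1 : 1 / u i ≤ 1 := by rw [div_le_one (hu0 i)]; exact hu1 i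
    rw [hd i]; linarith
  have hinvd : (fun i => ((1:ℝ) - d i)⁻¹) = u := funext fun i => by
    rw [hdsub i, one_div, inv_inv]
  refine ⟨⟨hdnn, ?_⟩, ?_⟩
  · rw [schur_diag A _ d hd1, hinvd]
    exact hufe
  · intro e he hepsd
    have he1' : ∀ i, 0 < 1 - e i := fun i => by
      linarith [entry_lt_one A hA _ e hepsd i]
    have hvpsd := (schur_diag A _ e he1').mp hepsd
    set v : Fin m → ℝ := fun i => (1 - e i)⁻¹ with hvdef
    have hv1 : ∀ i, 1 ≤ v i := fun i => by
      have h1 : 1 - e i ≤ 1 := by linarith [he i]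
      exact (one_le_inv₀ (he1' i)).mpr h1
    have H := hu_opt v hv1 hvpsd
    have hsum1 : ∑ i, c i / v i = ∑ i, c i - ∑ i, c i * e i := by
      rw [← Finset.sum_sub_distrib]
      exact Finset.sum_congr rfl fun i _ => by
        show c i / (1 - e i)⁻¹ = _
        rw [div_eq_mul_inv, inv_inv]; ring
    have hsum2 : ∑ i, c i * d i = ∑ i, c i - ∑ i, c i / u i := by
      rw [← Finset.sum_sub_distrib]
      exact Finset.sum_congr rfl fun i _ => by
        rw [hd i]
        have := (hu0 i).ne'
        field_simp
    rw [hsum1] at H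
    rw [hsum2]
    linarith
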